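/- Fix σ ∈ ℂ. The data (U,Y) are informative for interpolation at σ (i.e., there exists a unique M0 ∈ ℂ with Σ_{U,Y} ⊆ Σ^0_{σ,M0}) if and only if both rank conditions hold: (a) rank [H_n(U), 0, γ_n(σ); H_n(Y), γ_n(σ), 0] = rank [H_n(U), 0; H_n(Y), γ_n(σ)], and (b) rank [H_n(U), 0; H_n(Y), γ_n(σ)] = rank [H_n(U); H_n(Y)] + 1. -/

import Mathlib

open Matrix

/-- Hankel matrix of depth `n` built from data `W = (w_0, …, w_T)`. -/
def hankel (n T : ℕ) (h : n ≤ T) (W : Fin (T + 1) → ℝ) :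
    Matrix (Fin (n + 1)) (Fin (T - n + 1)) ℝ :=
  Matrix.of fun i j => W ⟨i.1 + j.1, by omega⟩

/-- The order-`n` system with parameters `[q  -p]` explains the data `(U, Y)`. -/
def Explains (n T : ℕ) (h : n ≤ T) (U Y : Fin (T + 1) → ℝ)
    (q : Fin (n + 1) → ℝ) (p : Fin n → ℝ) : Prop :=
  ∀ j : Fin (T - n + 1),
    ∑ i : Fin (n + 1), q i * U ⟨i.1 + j.1, by omega⟩
      - ∑ i : Fin n, p i * Y ⟨i.1 + j.1, by omega⟩ = Y ⟨n + j.1, by omega⟩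

private def Cmat (n T : ℕ) (hT : n ≤ T) (U Y : Fin (T + 1) → ℝ) :
    Matrix (Fin (n + 1) ⊕ Fin (n + 1)) (Fin (T - n + 1)) ℂ :=
  Matrix.fromRows ((hankel n T hT U).map (Complex.ofReal : ℝ → ℂ))
    ((hankel n T hT Y).map (Complex.ofReal : ℝ → ℂ))

private def NullV (n T : ℕ) (hT : n ≤ T) (U Y : Fin (T + 1) → ℝ)
    (w : Fin (n + 1) ⊕ Fin (n + 1) → ℂ) : Prop :=
  ∀ j, ∑ i, w i * Cmat n T hT U Y i j = 0

private def rv (n : ℕ) (p : Fin n → ℝ) : Fin (n + 1) → ℝ :=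
  fun i => if h : (i : ℕ) < n then p ⟨i, h⟩ else 1

private def wqp (n : ℕ) (q : Fin (n + 1) → ℝ) (p : Fin n → ℝ) :
    Fin (n + 1) ⊕ Fin (n + 1) → ℝ :=
  Sum.elim q fun i => -rv n p i

private lemma rv_sum (n : ℕ) (p : Fin n → ℝ) (σ : ℂ) :
    ∑ i : Fin (n + 1), (rv n p i : ℂ) * σ ^ (i : ℕ)
      = σ ^ n + ∑ i : Fin n, (p i : ℂ) * σ ^ (i : ℕ) := by
  rw [Fin.sum_univ_castSucc]
  have h1 : ∀ i : Fin n, rv n p i.castSucc = p i := by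
    intro i; simp [rv, i.isLt]
  have h2 : rv n p (Fin.last n) = 1 := by simp [rv]
  simp only [h1, h2, Fin.coe_castSucc, Fin.val_last]
  push_cast
  ring

private lemma rv_sum_real (n : ℕ) (p : Fin n → ℝ) (f : Fin (n + 1) → ℝ) :
    ∑ i : Fin (n + 1), rv n p i * f i
      = ∑ i : Fin n, p i * f i.castSucc + f (Fin.last n) := by
  rw [Fin.sum_univ_castSucc]
  have h1 : ∀ i : Fin n, rv n p i.castSucc = p i := by
    intro i; simp [rv, i.isLt]
  have h2 : rv n p (Fin.last n) = 1 := by simp [rv]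
  simp [h1, h2]

private lemma explains_iff_null (n T : ℕ) (hT : n ≤ T) (U Y : Fin (T + 1) → ℝ)
    (q : Fin (n + 1) → ℝ) (p : Fin n → ℝ) :
    Explains n T hT U Y q p ↔ NullV n T hT U Y (fun i => (wqp n q p i : ℂ)) := by
  unfold Explains NullV
  apply forall_congr'
  intro j
  rw [Fintype.sum_sum_type]
  have hU : ∀ i : Fin (n + 1),
      (wqp n q p (Sum.inl i) : ℂ) * Cmat n T hT U Y (Sum.inl i) j
        = ((q i * U ⟨i.1 + j.1, by omega⟩ : ℝ) : ℂ) := by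
    intro i; simp [wqp, Cmat, hankel]
  have hY : ∀ i : Fin (n + 1),
      (wqp n q p (Sum.inr i) : ℂ) * Cmat n T hT U Y (Sum.inr i) j
        = ((-(rv n p i * Y ⟨i.1 + j.1, by omega⟩) : ℝ) : ℂ) := by
    intro i; simp [wqp, Cmat, hankel]
  rw [Finset.sum_congr rfl (fun i _ => hU i), Finset.sum_congr rfl (fun i _ => hY i)]
  rw [← Complex.ofReal_sum, ← Complex.ofReal_sum, ← Complex.ofReal_add,
    Complex.ofReal_eq_zero]
  have hsplit : ∑ i : Fin (n + 1), rv n p i * Y ⟨i.1 + j.1, by omega⟩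
      = ∑ i : Fin n, p i * Y ⟨i.1 + j.1, by omega⟩ + Y ⟨n + j.1, by omega⟩ := by
    rw [rv_sum_real]
    rfl
  have hneg : ∑ i : Fin (n + 1), -(rv n p i * Y ⟨i.1 + j.1, by omega⟩)
      = -(∑ i : Fin n, p i * Y ⟨i.1 + j.1, by omega⟩ + Y ⟨n + j.1, by omega⟩) := by
    rw [Finset.sum_neg_distrib, hsplit]
  rw [hneg]
  constructor <;> intro h <;> linarith

private noncomputable def Qc (n : ℕ) (σ : ℂ) (q : Fin (n + 1) → ℝ) : ℂ :=
  ∑ i : Fin (n + 1), (q i : ℂ) * σ ^ (i : ℕ)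

private noncomputable def Pc (n : ℕ) (σ : ℂ) (p : Fin n → ℝ) : ℂ :=
  σ ^ n + ∑ i : Fin n, (p i : ℂ) * σ ^ (i : ℕ)

private noncomputable def dva (n : ℕ) (σ : ℂ) (a : Fin (n + 1) ⊕ Fin (n + 1) → ℝ) : ℂ :=
  ∑ i : Fin (n + 1), (a (Sum.inl i) : ℂ) * σ ^ (i : ℕ)

private noncomputable def dua (n : ℕ) (σ : ℂ) (a : Fin (n + 1) ⊕ Fin (n + 1) → ℝ) : ℂ :=
  ∑ i : Fin (n + 1), (a (Sum.inr i) : ℂ) * σ ^ (i : ℕ)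

private lemma null_comb (n T : ℕ) (hT : n ≤ T) (U Y : Fin (T + 1) → ℝ)
    (a b : Fin (n + 1) ⊕ Fin (n + 1) → ℝ) (s t : ℝ)
    (ha : NullV n T hT U Y (fun i => (a i : ℂ)))
    (hb : NullV n T hT U Y (fun i => (b i : ℂ))) :
    NullV n T hT U Y (fun i => ((s * a i + t * b i : ℝ) : ℂ)) := by
  intro j
  have h1 := ha j
  have h2 := hb j
  calc ∑ i, ((s * a i + t * b i : ℝ) : ℂ) * Cmat n T hT U Y i j
      = (s : ℂ) * ∑ i, (a i : ℂ) * Cmat n T hT U Y i j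
        + (t : ℂ) * ∑ i, (b i : ℂ) * Cmat n T hT U Y i j := by
        rw [Finset.mul_sum, Finset.mul_sum, ← Finset.sum_add_distrib]
        apply Finset.sum_congr rfl; intro i _; push_cast; ring
    _ = 0 := by rw [h1, h2]; ring

private lemma fam (n T : ℕ) (hT : n ≤ T) (U Y : Fin (T + 1) → ℝ) (σ : ℂ)
    (q0 : Fin (n + 1) → ℝ) (p0 : Fin n → ℝ) (h0 : Explains n T hT U Y q0 p0)
    (a : Fin (n + 1) ⊕ Fin (n + 1) → ℝ) (ha : NullV n T hT U Y (fun i => (a i : ℂ)))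
    (hlast : a (Sum.inr (Fin.last n)) = 0) (t : ℝ) :
    ∃ q p, Explains n T hT U Y q p ∧
      Qc n σ q = Qc n σ q0 + t * dva n σ a ∧
      Pc n σ p = Pc n σ p0 - t * dua n σ a := by
  refine ⟨fun i => q0 i + t * a (Sum.inl i),
    fun i => p0 i - t * a (Sum.inr i.castSucc), ?_, ?_, ?_⟩
  · rw [explains_iff_null]
    have hw : ∀ i, wqp n (fun i => q0 i + t * a (Sum.inl i))
        (fun i => p0 i - t * a (Sum.inr i.castSucc)) i
        = 1 * wqp n q0 p0 i + t * a i := by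
      rintro (i | i)
      · simp [wqp]
      · simp only [wqp, Sum.elim_inr]
        by_cases h : (i : ℕ) < n
        · rw [rv, rv]
          rw [dif_pos h, dif_pos h]
          have hc : (⟨(i : ℕ), h⟩ : Fin n).castSucc = i := by ext; rfl
          rw [hc]; ring
        · have hi : i = Fin.last n := by
            have h2 := i.isLt
            ext; simp only [Fin.val_last]; omega
          rw [rv, rv, dif_neg h, dif_neg h, hi, hlast]; ring
    have heq : (fun i => ((wqp n (fun i => q0 i + t * a (Sum.inl i))
        (fun i => p0 i - t * a (Sum.inr i.castSucc)) i : ℝ) : ℂ))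
        = fun i => ((1 * wqp n q0 p0 i + t * a i : ℝ) : ℂ) := by
      funext i; rw [hw i]
    rw [heq]
    exact null_comb n T hT U Y _ _ 1 t ((explains_iff_null n T hT U Y q0 p0).mp h0) ha
  · simp only [Qc, dva]
    rw [Finset.mul_sum, ← Finset.sum_add_distrib]
    apply Finset.sum_congr rfl; intro i _; push_cast; ring
  · simp only [Pc, dua]
    rw [Fin.sum_univ_castSucc (f := fun i => (a (Sum.inr i) : ℂ) * σ ^ (i : ℕ))]
    simp only [hlast, Fin.val_last, Complex.ofReal_zero, zero_mul, add_zero,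
      Fin.coe_castSucc]
    rw [Finset.mul_sum]
    have hterm : ∀ i : Fin n, ((p0 i - t * a (Sum.inr i.castSucc) : ℝ) : ℂ) * σ ^ (i : ℕ)
        = (p0 i : ℂ) * σ ^ (i : ℕ) - (t : ℂ) * ((a (Sum.inr i.castSucc) : ℂ) * σ ^ (i : ℕ)) := by
      intro i; push_cast; ring
    rw [Finset.sum_congr rfl fun i _ => hterm i, Finset.sum_sub_distrib]
    ring

private lemma wqp_null_dots (n : ℕ) (σ : ℂ) (q0 : Fin (n + 1) → ℝ) (p0 : Fin n → ℝ) :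
    dva n σ (wqp n q0 p0) = Qc n σ q0 ∧ dua n σ (wqp n q0 p0) = -Pc n σ p0 := by
  constructor
  · simp [dva, wqp, Qc]
  · simp only [dua, wqp, Sum.elim_inr]
    have h1 : ∑ x : Fin (n + 1), ((-rv n p0 x : ℝ) : ℂ) * σ ^ (x : ℕ)
        = -(∑ x : Fin (n + 1), (rv n p0 x : ℂ) * σ ^ (x : ℕ)) := by
      rw [← Finset.sum_neg_distrib]
      apply Finset.sum_congr rfl; intro i _; push_cast; ring
    rw [h1, rv_sum]; simp [Pc]

private lemma key_aux (n T : ℕ) (hT : n ≤ T) (U Y : Fin (T + 1) → ℝ) (σ : ℂ)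
    (q0 : Fin (n + 1) → ℝ) (p0 : Fin n → ℝ) (h0 : Explains n T hT U Y q0 p0)
    (M0 : ℂ)
    (hM0 : ∀ q p, Explains n T hT U Y q p → Qc n σ q = M0 * Pc n σ p)
    (a : Fin (n + 1) ⊕ Fin (n + 1) → ℝ) (ha : NullV n T hT U Y (fun i => (a i : ℂ))) :
    dva n σ a = -M0 * dua n σ a := by
  set bn := a (Sum.inr (Fin.last n)) with hbn
  set a' : Fin (n + 1) ⊕ Fin (n + 1) → ℝ := fun i => 1 * a i + bn * wqp n q0 p0 i with ha'
  have hnull' : NullV n T hT U Y (fun i => (a' i : ℂ)) :=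
    null_comb n T hT U Y _ _ 1 bn ha ((explains_iff_null n T hT U Y q0 p0).mp h0)
  have hlast' : a' (Sum.inr (Fin.last n)) = 0 := by
    have : rv n p0 (Fin.last n) = 1 := by simp [rv]
    simp [ha', wqp, this, hbn]
  have hQP0 := hM0 q0 p0 h0
  obtain ⟨q1, p1, h1, hQ1, hP1⟩ := fam n T hT U Y σ q0 p0 h0 a' hnull' hlast' 1
  have h01 := hM0 q1 p1 h1
  rw [hQ1, hP1] at h01
  have hdot := wqp_null_dots n σ q0 p0
  have hdv : dva n σ a' = dva n σ a + bn * Qc n σ q0 := by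
    rw [← hdot.1]
    simp only [dva, ha']
    rw [Finset.mul_sum, ← Finset.sum_add_distrib]
    apply Finset.sum_congr rfl; intro i _; push_cast; ring
  have hdu : dua n σ a' = dua n σ a - bn * Pc n σ p0 := by
    have : dua n σ a' = dua n σ a + bn * dua n σ (wqp n q0 p0) := by
      simp only [dua, ha']
      rw [Finset.mul_sum, ← Finset.sum_add_distrib]
      apply Finset.sum_congr rfl; intro i _; push_cast; ring
    rw [this, hdot.2]; ring
  rw [hdv, hdu] at h01
  push_cast at h01
  linear_combination h01 - (1 + (bn : ℂ)) * hQP0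

private def realC (n T : ℕ) (hT : n ≤ T) (U Y : Fin (T + 1) → ℝ)
    (i : Fin (n + 1) ⊕ Fin (n + 1)) (j : Fin (T - n + 1)) : ℝ :=
  Sum.elim (fun i => U ⟨i.1 + j.1, by omega⟩) (fun i => Y ⟨i.1 + j.1, by omega⟩) i

private lemma Cmat_eq (n T : ℕ) (hT : n ≤ T) (U Y : Fin (T + 1) → ℝ) :
    ∀ i j, Cmat n T hT U Y i j = ((realC n T hT U Y i j : ℝ) : ℂ) := by
  rintro (i | i) j <;> rfl

private lemma null_decomp (n T : ℕ) (hT : n ≤ T) (U Y : Fin (T + 1) → ℝ)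
    (w : Fin (n + 1) ⊕ Fin (n + 1) → ℂ) (hw : NullV n T hT U Y w) :
    NullV n T hT U Y (fun i => ((w i).re : ℂ)) ∧
    NullV n T hT U Y (fun i => ((w i).im : ℂ)) := by
  have key : ∀ j, (∑ i, (w i).re * realC n T hT U Y i j = 0)
      ∧ (∑ i, (w i).im * realC n T hT U Y i j = 0) := by
    intro j
    have h := hw j
    have h2 : ∑ i, w i * Cmat n T hT U Y i j
        = ((∑ i, (w i).re * realC n T hT U Y i j : ℝ) : ℂ)
          + ((∑ i, (w i).im * realC n T hT U Y i j : ℝ) : ℂ) * Complex.I := by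
      push_cast
      rw [Finset.sum_mul, ← Finset.sum_add_distrib]
      apply Finset.sum_congr rfl; intro i _
      rw [Cmat_eq]
      conv_lhs => rw [← Complex.re_add_im (w i)]
      push_cast
      ring
    rw [h] at h2
    constructor
    · have h3 := congrArg Complex.re h2.symm
      simpa only [Complex.add_re, Complex.mul_re, Complex.ofReal_re, Complex.ofReal_im,
        Complex.I_re, Complex.I_im, mul_zero, mul_one, zero_mul, sub_zero, zero_sub,
        add_zero, zero_add, neg_zero, Complex.zero_re] using h3
    · have h4 := congrArg Complex.im h2.symm
      simpa only [Complex.add_im, Complex.mul_im, Complex.ofReal_re, Complex.ofReal_im,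
        Complex.I_re, Complex.I_im, mul_zero, mul_one, zero_mul, sub_zero, zero_sub,
        add_zero, zero_add, neg_zero, Complex.zero_im] using h4
  constructor
  · intro j
    have hk := (key j).1
    rw [show (0 : ℂ) = ((0 : ℝ) : ℂ) by norm_num, ← hk]
    push_cast
    apply Finset.sum_congr rfl; intro i _
    rw [Cmat_eq]
  · intro j
    have hk := (key j).2
    rw [show (0 : ℂ) = ((0 : ℝ) : ℂ) by norm_num, ← hk]
    push_cast
    apply Finset.sum_congr rfl; intro i _
    rw [Cmat_eq]

private lemma key_complex (n T : ℕ) (hT : n ≤ T) (U Y : Fin (T + 1) → ℝ) (σ : ℂ)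
    (q0 : Fin (n + 1) → ℝ) (p0 : Fin n → ℝ) (h0 : Explains n T hT U Y q0 p0)
    (M0 : ℂ)
    (hM0 : ∀ q p, Explains n T hT U Y q p → Qc n σ q = M0 * Pc n σ p)
    (w : Fin (n + 1) ⊕ Fin (n + 1) → ℂ) (hw : NullV n T hT U Y w) :
    ∑ i : Fin (n + 1), w (Sum.inl i) * σ ^ (i : ℕ)
      = -M0 * ∑ i : Fin (n + 1), w (Sum.inr i) * σ ^ (i : ℕ) := by
  obtain ⟨ha, hb⟩ := null_decomp n T hT U Y w hw
  have k1 := key_aux n T hT U Y σ q0 p0 h0 M0 hM0 _ ha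
  have k2 := key_aux n T hT U Y σ q0 p0 h0 M0 hM0 _ hb
  have hl : ∑ i : Fin (n + 1), w (Sum.inl i) * σ ^ (i : ℕ)
      = dva n σ (fun i => (w i).re) + dva n σ (fun i => (w i).im) * Complex.I := by
    simp only [dva]
    rw [Finset.sum_mul, ← Finset.sum_add_distrib]
    apply Finset.sum_congr rfl; intro i _
    conv_lhs => rw [← Complex.re_add_im (w (Sum.inl i))]
    push_cast; ring
  have hr : ∑ i : Fin (n + 1), w (Sum.inr i) * σ ^ (i : ℕ)
      = dua n σ (fun i => (w i).re) + dua n σ (fun i => (w i).im) * Complex.I := by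
    simp only [dua]
    rw [Finset.sum_mul, ← Finset.sum_add_distrib]
    apply Finset.sum_congr rfl; intro i _
    conv_lhs => rw [← Complex.re_add_im (w (Sum.inr i))]
    push_cast; ring
  rw [hl, hr, k1, k2]
  ring

open Module Submodule in
private lemma mem_span_iff_dot {ι : Type*} [Fintype ι] [DecidableEq ι]
    (S : Submodule ℂ (ι → ℂ)) (x : ι → ℂ) :
    x ∈ S ↔ ∀ w : ι → ℂ, (∀ y ∈ S, ∑ i, w i * y i = 0) → ∑ i, w i * x i = 0 := by
  constructor
  · intro hx w hw; exact hw x hx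
  · intro h
    by_contra hx
    obtain ⟨f, hfx, hfS⟩ := S.exists_dual_map_eq_bot_of_notMem hx inferInstance
    have key : ∀ y : ι → ℂ, ∑ i, f (Pi.single i 1) * y i = f y := by
      intro y
      have hy : y = ∑ i, y i • (Pi.single i 1 : ι → ℂ) := by
        funext j
        simp [Pi.single_apply, Finset.sum_apply]
      conv_rhs => rw [hy]
      rw [map_sum]
      simp [mul_comm]
    have h2 := h (fun i => f (Pi.single i 1)) (fun y hy => by
      rw [key]
      have : f y ∈ S.map f := Submodule.mem_map_of_mem hy
      rwa [hfS, Submodule.mem_bot] at this)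
    rw [key] at h2
    exact hfx h2

open Module Submodule in
private lemma finrank_span_insert_of_nmem {K V : Type*} [Field K] [AddCommGroup V] [Module K V]
    [FiniteDimensional K V] {s : Set V} {x : V} (hx : x ∉ Submodule.span K s) :
    finrank K (Submodule.span K (insert x s)) = finrank K (Submodule.span K s) + 1 := by
  have hx0 : x ≠ 0 := fun h => hx (h ▸ (Submodule.span K s).zero_mem)
  have hinf : Submodule.span K s ⊓ (K ∙ x) = ⊥ := by
    rw [eq_bot_iff]
    rintro y ⟨hy1, hy2⟩
    obtain ⟨c, rfl⟩ := Submodule.mem_span_singleton.mp hy2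
    rcases eq_or_ne c 0 with rfl | hc
    · simp
    · exact absurd (by simpa [hc] using Submodule.smul_mem _ c⁻¹ hy1) hx
  have h := Submodule.finrank_sup_add_finrank_inf_eq (Submodule.span K s) (K ∙ x)
  rw [hinf] at h
  simp only [finrank_bot, add_zero] at h
  rw [Submodule.span_insert, sup_comm, h, finrank_span_singleton hx0]

open Module Submodule in
private lemma finrank_span_insert_eq_iff {K V : Type*} [Field K] [AddCommGroup V] [Module K V]
    [FiniteDimensional K V] {s : Set V} {x : V} :
    finrank K (Submodule.span K (insert x s)) = finrank K (Submodule.span K s) ↔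
      x ∈ Submodule.span K s := by
  constructor
  · intro h
    have hle : Submodule.span K s ≤ Submodule.span K (insert x s) :=
      Submodule.span_mono (Set.subset_insert _ _)
    have heq := Submodule.eq_of_le_of_finrank_le hle h.le
    rw [heq]
    exact Submodule.subset_span (Set.mem_insert _ _)
  · intro h
    rw [Submodule.span_insert_eq_span h]

private noncomputable def dotL {ι : Type*} [Fintype ι] (w : ι → ℂ) : (ι → ℂ) →ₗ[ℂ] ℂ where
  toFun y := ∑ i, w i * y i
  map_add' y z := by
    simp only [Pi.add_apply, mul_add]
    rw [Finset.sum_add_distrib]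
  map_smul' c y := by
    simp only [Pi.smul_apply, smul_eq_mul, RingHom.id_apply, Finset.mul_sum]
    apply Finset.sum_congr rfl; intro i _; ring

private lemma forall_mem_span_dot {ι : Type*} [Fintype ι] (w : ι → ℂ) (s : Set (ι → ℂ)) :
    (∀ y ∈ Submodule.span ℂ s, ∑ i, w i * y i = 0) ↔ ∀ y ∈ s, ∑ i, w i * y i = 0 := by
  constructor
  · exact fun h y hy => h y (Submodule.subset_span hy)
  · intro h y hy
    have hle : Submodule.span ℂ s ≤ LinearMap.ker (dotL w) :=
      Submodule.span_le.mpr fun z hz => h z hz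
    exact hle hy

private noncomputable def uVec (n : ℕ) (σ : ℂ) : Fin (n + 1) ⊕ Fin (n + 1) → ℂ :=
  Sum.elim 0 fun i => σ ^ (i : ℕ)

private noncomputable def vVec (n : ℕ) (σ : ℂ) : Fin (n + 1) ⊕ Fin (n + 1) → ℂ :=
  Sum.elim (fun i => σ ^ (i : ℕ)) 0

private lemma range_Bt (n T : ℕ) (hT : n ≤ T) (U Y : Fin (T + 1) → ℝ) (σ : ℂ) :
    Set.range (Matrix.fromBlocks
        ((hankel n T hT U).map (Complex.ofReal : ℝ → ℂ))
        (0 : Matrix (Fin (n + 1)) (Fin 1) ℂ)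
        ((hankel n T hT Y).map (Complex.ofReal : ℝ → ℂ))
        (Matrix.of fun (i : Fin (n + 1)) (_ : Fin 1) => σ ^ (i : ℕ))).col
      = insert (uVec n σ) (Set.range (Cmat n T hT U Y).col) := by
  have hfun : (Matrix.fromBlocks
        ((hankel n T hT U).map (Complex.ofReal : ℝ → ℂ))
        (0 : Matrix (Fin (n + 1)) (Fin 1) ℂ)
        ((hankel n T hT Y).map (Complex.ofReal : ℝ → ℂ))
        (Matrix.of fun (i : Fin (n + 1)) (_ : Fin 1) => σ ^ (i : ℕ))).col
      = Sum.elim (Cmat n T hT U Y).col (fun _ : Fin 1 => uVec n σ) := by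
    funext x
    rcases x with j | j
    · funext i; rcases i with i | i <;> rfl
    · funext i; rcases i with i | i <;> rfl
  rw [hfun, Set.Sum.elim_range, Set.range_const, Set.union_singleton]

private lemma range_At (n T : ℕ) (hT : n ≤ T) (U Y : Fin (T + 1) → ℝ) (σ : ℂ) :
    Set.range (Matrix.fromBlocks
        ((hankel n T hT U).map (Complex.ofReal : ℝ → ℂ))
        (Matrix.of fun (i : Fin (n + 1)) (j : Fin 2) => if j = 0 then 0 else σ ^ (i : ℕ))
        ((hankel n T hT Y).map (Complex.ofReal : ℝ → ℂ))
        (Matrix.of fun (i : Fin (n + 1)) (j : Fin 2) => if j = 0 then σ ^ (i : ℕ) else 0)).col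
      = insert (vVec n σ) (insert (uVec n σ) (Set.range (Cmat n T hT U Y).col)) := by
  have hfun : (Matrix.fromBlocks
        ((hankel n T hT U).map (Complex.ofReal : ℝ → ℂ))
        (Matrix.of fun (i : Fin (n + 1)) (j : Fin 2) => if j = 0 then 0 else σ ^ (i : ℕ))
        ((hankel n T hT Y).map (Complex.ofReal : ℝ → ℂ))
        (Matrix.of fun (i : Fin (n + 1)) (j : Fin 2) => if j = 0 then σ ^ (i : ℕ) else 0)).col
      = Sum.elim (Cmat n T hT U Y).col
          (fun j : Fin 2 => if j = 0 then uVec n σ else vVec n σ) := by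
    funext x
    rcases x with j | j
    · funext i; rcases i with i | i <;> rfl
    · funext i
      rcases i with i | i <;> fin_cases j <;>
        simp [uVec, vVec, Matrix.fromBlocks, Matrix.transpose, Matrix.col_apply]
  rw [hfun, Set.Sum.elim_range]
  have h2 : Set.range (fun j : Fin 2 => if j = 0 then uVec n σ else vVec n σ)
      = {uVec n σ, vVec n σ} := by
    ext z
    simp [Fin.exists_fin_two, eq_comm]
  rw [h2]
  ext z
  simp only [Set.mem_union, Set.mem_insert_iff, Set.mem_range, Set.mem_singleton_iff]
  tauto

private lemma rankB_iff (n T : ℕ) (hT : n ≤ T) (U Y : Fin (T + 1) → ℝ) (σ : ℂ) :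
    (Matrix.fromBlocks
        ((hankel n T hT U).map (Complex.ofReal : ℝ → ℂ))
        (0 : Matrix (Fin (n + 1)) (Fin 1) ℂ)
        ((hankel n T hT Y).map (Complex.ofReal : ℝ → ℂ))
        (Matrix.of fun (i : Fin (n + 1)) (_ : Fin 1) => σ ^ (i : ℕ))).rank
      = (Cmat n T hT U Y).rank + 1 ↔
      uVec n σ ∉ Submodule.span ℂ (Set.range (Cmat n T hT U Y).col) := by
  rw [Matrix.rank_eq_finrank_span_cols, Matrix.rank_eq_finrank_span_cols,
    range_Bt n T hT U Y σ]
  constructor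
  · intro h hu
    rw [Submodule.span_insert_eq_span hu] at h
    omega
  · intro hu
    exact finrank_span_insert_of_nmem hu

private lemma rankA_iff (n T : ℕ) (hT : n ≤ T) (U Y : Fin (T + 1) → ℝ) (σ : ℂ) :
    (Matrix.fromBlocks
        ((hankel n T hT U).map (Complex.ofReal : ℝ → ℂ))
        (Matrix.of fun (i : Fin (n + 1)) (j : Fin 2) => if j = 0 then 0 else σ ^ (i : ℕ))
        ((hankel n T hT Y).map (Complex.ofReal : ℝ → ℂ))
        (Matrix.of fun (i : Fin (n + 1)) (j : Fin 2) => if j = 0 then σ ^ (i : ℕ) else 0)).rank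
      = (Matrix.fromBlocks
        ((hankel n T hT U).map (Complex.ofReal : ℝ → ℂ))
        (0 : Matrix (Fin (n + 1)) (Fin 1) ℂ)
        ((hankel n T hT Y).map (Complex.ofReal : ℝ → ℂ))
        (Matrix.of fun (i : Fin (n + 1)) (_ : Fin 1) => σ ^ (i : ℕ))).rank ↔
      vVec n σ ∈ Submodule.span ℂ (insert (uVec n σ) (Set.range (Cmat n T hT U Y).col)) := by
  rw [Matrix.rank_eq_finrank_span_cols, Matrix.rank_eq_finrank_span_cols,
    range_At n T hT U Y σ, range_Bt n T hT U Y σ]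
  exact finrank_span_insert_eq_iff

private lemma dual_u (n T : ℕ) (hT : n ≤ T) (U Y : Fin (T + 1) → ℝ) (σ : ℂ) :
    uVec n σ ∈ Submodule.span ℂ (Set.range (Cmat n T hT U Y).col) ↔
      ∀ w, NullV n T hT U Y w → ∑ i : Fin (n + 1), w (Sum.inr i) * σ ^ (i : ℕ) = 0 := by
  rw [mem_span_iff_dot]
  apply forall_congr'
  intro w
  rw [forall_mem_span_dot]
  have h1 : (∀ y ∈ Set.range (Cmat n T hT U Y).col, ∑ i, w i * y i = 0) ↔
      NullV n T hT U Y w := by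
    rw [Set.forall_mem_range]
    exact Iff.rfl
  have h2 : ∑ i, w i * uVec n σ i = ∑ i : Fin (n + 1), w (Sum.inr i) * σ ^ (i : ℕ) := by
    rw [Fintype.sum_sum_type]
    simp [uVec]
  rw [h1, h2]

private lemma dual_v (n T : ℕ) (hT : n ≤ T) (U Y : Fin (T + 1) → ℝ) (σ : ℂ) :
    vVec n σ ∈ Submodule.span ℂ (insert (uVec n σ) (Set.range (Cmat n T hT U Y).col)) ↔
      ∀ w, NullV n T hT U Y w →
        (∑ i : Fin (n + 1), w (Sum.inr i) * σ ^ (i : ℕ)) = 0 →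
        ∑ i : Fin (n + 1), w (Sum.inl i) * σ ^ (i : ℕ) = 0 := by
  rw [mem_span_iff_dot]
  apply forall_congr'
  intro w
  rw [forall_mem_span_dot, Set.forall_mem_insert, Set.forall_mem_range]
  have h1 : (∀ j, ∑ i, w i * (Cmat n T hT U Y).col j i = 0) ↔ NullV n T hT U Y w := Iff.rfl
  have h2 : ∑ i, w i * uVec n σ i = ∑ i : Fin (n + 1), w (Sum.inr i) * σ ^ (i : ℕ) := by
    rw [Fintype.sum_sum_type]; simp [uVec]
  have h3 : ∑ i, w i * vVec n σ i = ∑ i : Fin (n + 1), w (Sum.inl i) * σ ^ (i : ℕ) := by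
    rw [Fintype.sum_sum_type]; simp [vVec]
  rw [h1, h2, h3]
  tauto

private lemma null_combC (n T : ℕ) (hT : n ≤ T) (U Y : Fin (T + 1) → ℝ)
    (w1 w2 : Fin (n + 1) ⊕ Fin (n + 1) → ℂ) (s t : ℂ)
    (h1 : NullV n T hT U Y w1) (h2 : NullV n T hT U Y w2) :
    NullV n T hT U Y (fun i => s * w1 i + t * w2 i) := by
  intro j
  have ha := h1 j
  have hb := h2 j
  calc ∑ i, (s * w1 i + t * w2 i) * Cmat n T hT U Y i j
      = s * ∑ i, w1 i * Cmat n T hT U Y i j + t * ∑ i, w2 i * Cmat n T hT U Y i j := by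
        rw [Finset.mul_sum, Finset.mul_sum, ← Finset.sum_add_distrib]
        apply Finset.sum_congr rfl; intro i _; ring
    _ = 0 := by rw [ha, hb]; ring


theorem stmt_6 (n T : ℕ) (hT : n ≤ T) (U Y : Fin (T + 1) → ℝ) (σ : ℂ)
    (hne : ∃ (q : Fin (n + 1) → ℝ) (p : Fin n → ℝ), Explains n T hT U Y q p) :
    (∃! M0 : ℂ, ∀ (q : Fin (n + 1) → ℝ) (p : Fin n → ℝ), Explains n T hT U Y q p →
        ∑ i : Fin (n + 1), (q i : ℂ) * σ ^ (i : ℕ)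
          = M0 * (σ ^ n + ∑ i : Fin n, (p i : ℂ) * σ ^ (i : ℕ))) ↔
      ((Matrix.fromBlocks
            ((hankel n T hT U).map (Complex.ofReal : ℝ → ℂ))
            (Matrix.of fun (i : Fin (n + 1)) (j : Fin 2) =>
              if j = 0 then 0 else σ ^ (i : ℕ))
            ((hankel n T hT Y).map (Complex.ofReal : ℝ → ℂ))
            (Matrix.of fun (i : Fin (n + 1)) (j : Fin 2) =>
              if j = 0 then σ ^ (i : ℕ) else 0)).rank
          = (Matrix.fromBlocks
            ((hankel n T hT U).map (Complex.ofReal : ℝ → ℂ))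
            (0 : Matrix (Fin (n + 1)) (Fin 1) ℂ)
            ((hankel n T hT Y).map (Complex.ofReal : ℝ → ℂ))
            (Matrix.of fun (i : Fin (n + 1)) (_ : Fin 1) => σ ^ (i : ℕ))).rank) ∧
      ((Matrix.fromBlocks
            ((hankel n T hT U).map (Complex.ofReal : ℝ → ℂ))
            (0 : Matrix (Fin (n + 1)) (Fin 1) ℂ)
            ((hankel n T hT Y).map (Complex.ofReal : ℝ → ℂ))
            (Matrix.of fun (i : Fin (n + 1)) (_ : Fin 1) => σ ^ (i : ℕ))).rank
          = (Matrix.fromRows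
            ((hankel n T hT U).map (Complex.ofReal : ℝ → ℂ))
            ((hankel n T hT Y).map (Complex.ofReal : ℝ → ℂ))).rank + 1) := by
  obtain ⟨q0, p0, h0⟩ := hne
  rw [show Matrix.fromRows ((hankel n T hT U).map (Complex.ofReal : ℝ → ℂ))
      ((hankel n T hT Y).map (Complex.ofReal : ℝ → ℂ)) = Cmat n T hT U Y from rfl,
    rankA_iff n T hT U Y σ, rankB_iff n T hT U Y σ, dual_v n T hT U Y σ,
    dual_u n T hT U Y σ]
  constructor
  · rintro ⟨M0, hM0, huniq⟩
    have hM0' : ∀ q p, Explains n T hT U Y q p → Qc n σ q = M0 * Pc n σ p := hM0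
    constructor
    · intro w hw hsu
      have hk := key_complex n T hT U Y σ q0 p0 h0 M0 hM0' w hw
      rw [hk, hsu, mul_zero]
    · intro hall
      have hzero : ∀ q p, Explains n T hT U Y q p → Pc n σ p = 0 ∧ Qc n σ q = 0 := by
        intro q p hqp
        have hnull := (explains_iff_null n T hT U Y q p).mp hqp
        have hduz : dua n σ (wqp n q p) = 0 := hall _ hnull
        have hd2 := (wqp_null_dots n σ q p).2
        rw [hduz] at hd2
        have hP : Pc n σ p = 0 := by linear_combination hd2
        exact ⟨hP, by rw [hM0' q p hqp, hP, mul_zero]⟩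
      have h1 : ∀ (q : Fin (n + 1) → ℝ) (p : Fin n → ℝ), Explains n T hT U Y q p →
          ∑ i : Fin (n + 1), (q i : ℂ) * σ ^ (i : ℕ)
            = (M0 + 1) * (σ ^ n + ∑ i : Fin n, (p i : ℂ) * σ ^ (i : ℕ)) := by
        intro q p hqp
        show Qc n σ q = (M0 + 1) * Pc n σ p
        rw [(hzero q p hqp).1, (hzero q p hqp).2, mul_zero]
      have := huniq (M0 + 1) h1
      simp at this
  · rintro ⟨hC1, hC2⟩
    push_neg at hC2
    obtain ⟨w, hw, hsu⟩ := hC2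
    obtain ⟨ha, hb⟩ := null_decomp n T hT U Y w hw
    have hsplit : ∑ i : Fin (n + 1), w (Sum.inr i) * σ ^ (i : ℕ)
        = dua n σ (fun i => (w i).re) + dua n σ (fun i => (w i).im) * Complex.I := by
      simp only [dua]
      rw [Finset.sum_mul, ← Finset.sum_add_distrib]
      apply Finset.sum_congr rfl; intro i _
      conv_lhs => rw [← Complex.re_add_im (w (Sum.inr i))]
      push_cast; ring
    obtain ⟨c, hcnull, hcdu⟩ : ∃ c : Fin (n + 1) ⊕ Fin (n + 1) → ℝ,
        NullV n T hT U Y (fun i => (c i : ℂ)) ∧ dua n σ c ≠ 0 := by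
      by_cases hre : dua n σ (fun i => (w i).re) ≠ 0
      · exact ⟨_, ha, hre⟩
      · refine ⟨_, hb, ?_⟩
        intro him
        push_neg at hre
        rw [hsplit, hre, him] at hsu
        simp at hsu
    obtain ⟨qs, ps, hs, hPs⟩ : ∃ q p, Explains n T hT U Y q p ∧ Pc n σ p ≠ 0 := by
      by_cases hP0 : Pc n σ p0 = 0
      · set bn := c (Sum.inr (Fin.last n)) with hbn
        set c' : Fin (n + 1) ⊕ Fin (n + 1) → ℝ :=
          fun i => 1 * c i + bn * wqp n q0 p0 i with hc'
        have hnull' : NullV n T hT U Y (fun i => (c' i : ℂ)) :=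
          null_comb n T hT U Y _ _ 1 bn hcnull
            ((explains_iff_null n T hT U Y q0 p0).mp h0)
        have hlast' : c' (Sum.inr (Fin.last n)) = 0 := by
          have hrv : rv n p0 (Fin.last n) = 1 := by simp [rv]
          simp [hc', wqp, hrv, hbn]
        have hdu' : dua n σ c' = dua n σ c - bn * Pc n σ p0 := by
          have hstep : dua n σ c' = dua n σ c + bn * dua n σ (wqp n q0 p0) := by
            simp only [dua, hc']
            rw [Finset.mul_sum, ← Finset.sum_add_distrib]
            apply Finset.sum_congr rfl; intro i _; push_cast; ring
          rw [hstep, (wqp_null_dots n σ q0 p0).2]; ring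
        obtain ⟨q1, p1, h1, _, hP1⟩ := fam n T hT U Y σ q0 p0 h0 c' hnull' hlast' 1
        refine ⟨q1, p1, h1, ?_⟩
        rw [hP1, hdu', hP0]
        push_cast
        simpa using hcdu
      · exact ⟨q0, p0, h0, hP0⟩
    refine ⟨Qc n σ qs / Pc n σ ps, ?_, ?_⟩
    · intro q p hqp
      show Qc n σ q = Qc n σ qs / Pc n σ ps * Pc n σ p
      have hw1 := (explains_iff_null n T hT U Y q p).mp hqp
      have hw2 := (explains_iff_null n T hT U Y qs ps).mp hs
      set ω : Fin (n + 1) ⊕ Fin (n + 1) → ℂ :=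
        fun i => Pc n σ ps * ((wqp n q p i : ℝ) : ℂ)
          + (-Pc n σ p) * ((wqp n qs ps i : ℝ) : ℂ) with hω
      have hωnull : NullV n T hT U Y ω := null_combC n T hT U Y _ _ _ _ hw1 hw2
      have hωu : ∑ i : Fin (n + 1), ω (Sum.inr i) * σ ^ (i : ℕ) = 0 := by
        have e1 : ∑ i : Fin (n + 1), ω (Sum.inr i) * σ ^ (i : ℕ)
            = Pc n σ ps * dua n σ (wqp n q p)
              + (-Pc n σ p) * dua n σ (wqp n qs ps) := by
          simp only [hω, dua]
          rw [Finset.mul_sum, Finset.mul_sum, ← Finset.sum_add_distrib]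
          apply Finset.sum_congr rfl; intro i _; ring
        rw [e1, (wqp_null_dots n σ q p).2, (wqp_null_dots n σ qs ps).2]; ring
      have hωv := hC1 ω hωnull hωu
      have e2 : ∑ i : Fin (n + 1), ω (Sum.inl i) * σ ^ (i : ℕ)
          = Pc n σ ps * Qc n σ q - Pc n σ p * Qc n σ qs := by
        have e3 : ∑ i : Fin (n + 1), ω (Sum.inl i) * σ ^ (i : ℕ)
            = Pc n σ ps * dva n σ (wqp n q p)
              + (-Pc n σ p) * dva n σ (wqp n qs ps) := by
          simp only [hω, dva]
          rw [Finset.mul_sum, Finset.mul_sum, ← Finset.sum_add_distrib]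
          apply Finset.sum_congr rfl; intro i _; ring
        rw [e3, (wqp_null_dots n σ q p).1, (wqp_null_dots n σ qs ps).1]; ring
      rw [e2] at hωv
      field_simp
      linear_combination hωv
    · intro M0' hM0'
      have hqs := hM0' qs ps hs
      show M0' = Qc n σ qs / Pc n σ ps
      have hqs' : Qc n σ qs = M0' * Pc n σ ps := hqs
      field_simp
      linear_combination -hqs'
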